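/- With the fusion product sets on words over a group G with identity e: for i ∈ {2,4}, {e^i} ∘ G_1 ∘ {e^i} ⊆ E_3, and moreover ({e^2} ∘ G_1 ∘ {e^2}) ∩ ({e^4} ∘ G_1 ∘ {e^4}) = ∅, where e^i is the word of i copies of e, G_1 the set of words starting with a letter ≠ e, and E_3 the set of words starting with e and containing a letter ≠ e. -/

import Mathlib

/-- Involution on words: reverse and invert letters. -/
def wordInv {G : Type*} [Group G] (w : List G) : List G := (w.map (·⁻¹)).reverse

/-- Fusion of two words: multiply the last letter of `u` with the first letter of `v`. -/
def fuse {G : Type*} [Group G] (u v : List G) : List G :=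
  match u.getLast?, v with
  | some a, b :: t => u.dropLast ++ (a * b) :: t
  | _, _ => u ++ v

/-- `γ` appears in the fusion-rule expansion of `b_x ⊗ b_y`, i.e. there is a
decomposition `x = u·t`, `y = t̄·v` with `γ = u·v` or (for `u, v` nonempty) `γ = u∗v`. -/
def inProd {G : Type*} [Group G] (x y γ : List G) : Prop :=
  ∃ u t v : List G, x = u ++ t ∧ y = wordInv t ++ v ∧
    (γ = u ++ v ∨ (u ≠ [] ∧ v ≠ [] ∧ γ = fuse u v))

/-- The product set `A ∘ B` of two sets of words. -/
def circ {G : Type*} [Group G] (A B : Set (List G)) : Set (List G) :=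
  {γ | ∃ x ∈ A, ∃ y ∈ B, inProd x y γ}

/-- Words starting with `e`, together with the empty word. -/
def E1 (G : Type*) [Group G] : Set (List G) := {w | w = [] ∨ w.head? = some 1}

/-- Words starting with a letter `≠ e`. -/
def G1 (G : Type*) [Group G] : Set (List G) := {w | ∃ a, w.head? = some a ∧ a ≠ 1}

/-- Words starting and ending with a letter `≠ e`. -/
def G2 (G : Type*) [Group G] : Set (List G) :=
  {w | (∃ a, w.head? = some a ∧ a ≠ 1) ∧ (∃ b, w.getLast? = some b ∧ b ≠ 1)}

/-- Words starting with `e` that contain at least one letter `≠ e`. -/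
def E3 (G : Type*) [Group G] : Set (List G) := {w | w.head? = some 1 ∧ ∃ a ∈ w, a ≠ 1}

section Aux
variable {G : Type*} [Group G]

lemma wordInv_replicate (k : ℕ) : wordInv (List.replicate k (1:G)) = List.replicate k 1 := by
  simp [wordInv]

lemma wordInv_wordInv (t : List G) : wordInv (wordInv t) = t := by
  simp [wordInv, List.map_reverse, List.map_map, Function.comp]

lemma fuse_concat (u : List G) (c b : G) (t : List G) :
    fuse (u ++ [c]) (b :: t) = u ++ (c*b) :: t := by
  unfold fuse
  rw [List.getLast?_concat]
  simp [List.dropLast_concat]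

lemma fuse_one_cons {u : List G} (hu : u ≠ []) (r : List G) :
    fuse u ((1:G) :: r) = u ++ r := by
  obtain ⟨p, c, rfl⟩ := (List.eq_nil_or_concat u).resolve_left hu
  rw [List.concat_eq_append] at *; rw [fuse_concat]; simp

/-- if a word `e^m ++ a::w0` (with `a ≠ 1`) equals `u ++ e^k`, then `u` contains
the prefix `e^m ++ [a]`. -/
lemma prefix_lemma {a : G} (ha : a ≠ 1) :
    ∀ (m k : ℕ) (w0 u : List G),
      List.replicate m (1:G) ++ a :: w0 = u ++ List.replicate k 1 →
      ∃ w1, u = List.replicate m 1 ++ a :: w1 := by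
  intro m
  induction m with
  | zero =>
    intro k w0 u h
    cases u with
    | nil =>
      simp only [List.replicate_zero, List.nil_append] at h
      exfalso
      have : a ∈ List.replicate k (1:G) := by rw [← h]; simp
      exact ha (List.eq_of_mem_replicate this)
    | cons b u' =>
      simp only [List.replicate_zero, List.nil_append, List.cons_append] at h
      obtain ⟨hb, -⟩ := List.cons_eq_cons.mp h
      exact ⟨u', by simp [hb]⟩
  | succ m ih =>
    intro k w0 u h
    rw [List.replicate_succ, List.cons_append] at h
    cases u with
    | nil =>
      simp at h
      have : a ∈ List.replicate k (1:G) := by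
        rw [← h]; simp
      exact absurd (List.eq_of_mem_replicate this) ha
    | cons b u' =>
      rw [List.cons_append] at h
      obtain ⟨hb, h'⟩ := List.cons_eq_cons.mp h
      obtain ⟨w1, hw1⟩ := ih k w0 u' h'
      exact ⟨w1, by rw [List.replicate_succ, hw1, hb, List.cons_append]⟩

lemma lead_count_unique {a a' : G} (ha : a ≠ 1) (ha' : a' ≠ 1) :
    ∀ (m m' : ℕ) (w w' : List G),
      List.replicate m (1:G) ++ a :: w = List.replicate m' 1 ++ a' :: w' → m = m' := by
  intro m
  induction m with
  | zero =>
    intro m' w w' h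
    cases m' with
    | zero => rfl
    | succ m' =>
      rw [List.replicate_succ] at h
      simp at h
      exact absurd h.1 ha
  | succ m ih =>
    intro m' w w' h
    cases m' with
    | zero =>
      rw [List.replicate_succ] at h
      simp at h
      exact absurd h.1.symm ha'
    | succ m' =>
      rw [List.replicate_succ, List.replicate_succ] at h
      simp only [List.cons_append, List.cons_eq_cons] at h
      exact congrArg Nat.succ (ih m' w w' h.2)

/-- Decompose an element of `{e^i} ∘ G1`. -/
lemma stepA {i : ℕ} (hi : 1 ≤ i) {γ : List G}
    (h : γ ∈ circ {List.replicate i (1 : G)} (G1 G)) :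
    ∃ m a w, (m = i ∨ m + 1 = i) ∧ γ = List.replicate m 1 ++ a :: w ∧ a ≠ 1 := by
  obtain ⟨x, hx, y, hy, u, t, v, hx2, hy2, hcase⟩ := h
  rw [Set.mem_singleton_iff] at hx
  subst hx
  obtain ⟨a, hhead, ha⟩ := hy
  -- y = a :: ys
  obtain ⟨ys, rfl⟩ : ∃ ys, y = a :: ys := by
    cases y with
    | nil => simp at hhead
    | cons b ys => simp at hhead; exact ⟨ys, by rw [hhead]⟩
  -- u and t are replicates of 1
  have hu : u = List.replicate u.length (1:G) := by
    apply List.eq_replicate_of_mem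
    intro b hb
    have : b ∈ List.replicate i (1:G) := by rw [hx2]; exact List.mem_append_left _ hb
    exact List.eq_of_mem_replicate this
  have ht : t = List.replicate t.length (1:G) := by
    apply List.eq_replicate_of_mem
    intro b hb
    have : b ∈ List.replicate i (1:G) := by rw [hx2]; exact List.mem_append_right _ hb
    exact List.eq_of_mem_replicate this
  -- t must be empty
  have htnil : t = [] := by
    cases t with
    | nil => rfl
    | cons c t' =>
      exfalso
      rw [ht, wordInv_replicate] at hy2
      rw [List.length_cons, List.replicate_succ, List.cons_append] at hy2
      exact ha (List.cons_eq_cons.mp hy2).1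
  subst htnil
  have hulen : u.length = i := by
    have := congrArg List.length hx2
    simpa using this.symm
  rw [wordInv] at hy2
  simp at hy2
  rcases hcase with hγ | ⟨hune, hvne, hγ⟩
  · refine ⟨i, a, ys, Or.inl rfl, ?_, ha⟩
    rw [hγ, hu, hulen, ← hy2]
  · refine ⟨i - 1, a, ys, Or.inr (by omega), ?_, ha⟩
    rw [hγ, hu, hulen, ← hy2]
    have : List.replicate i (1:G) = List.replicate (i-1) 1 ++ [1] := by
      rw [← List.replicate_succ' (n := i-1)]
      congr 1
      omega
    rw [this, fuse_concat]
    simp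

/-- Decompose an element of `({e^i} ∘ G1) ∘ {e^i}`. -/
lemma stepMain {i : ℕ} (hi : 1 ≤ i) {γ : List G}
    (h : γ ∈ circ (circ {List.replicate i (1 : G)} (G1 G)) {List.replicate i (1 : G)}) :
    ∃ m a w, (m = i ∨ m + 1 = i) ∧ γ = List.replicate m 1 ++ a :: w ∧ a ≠ 1 := by
  obtain ⟨x, hx, y, hy, u, t, v, hx2, hy2, hcase⟩ := h
  rw [Set.mem_singleton_iff] at hy
  subst hy
  obtain ⟨m, a, w0, hm, hxeq, ha⟩ := stepA hi hx
  -- wordInv t and v are replicates of 1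
  have hwt : wordInv t = List.replicate (wordInv t).length (1:G) := by
    apply List.eq_replicate_of_mem
    intro b hb
    have : b ∈ List.replicate i (1:G) := by rw [hy2]; exact List.mem_append_left _ hb
    exact List.eq_of_mem_replicate this
  have hv : v = List.replicate v.length (1:G) := by
    apply List.eq_replicate_of_mem
    intro b hb
    have : b ∈ List.replicate i (1:G) := by rw [hy2]; exact List.mem_append_right _ hb
    exact List.eq_of_mem_replicate this
  have ht : t = List.replicate (wordInv t).length (1:G) := by
    conv_lhs => rw [← wordInv_wordInv t, hwt, wordInv_replicate]
  -- u contains the prefix e^m ++ [a]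
  rw [hxeq, ht] at hx2
  obtain ⟨w1, hu⟩ := prefix_lemma ha m _ w0 u hx2
  have hune : u ≠ [] := by
    rw [hu]; simp
  rcases hcase with hγ | ⟨-, hvne, hγ⟩
  · exact ⟨m, a, w1 ++ v, hm, by rw [hγ, hu]; simp, ha⟩
  · have hvlen : 1 ≤ v.length := by
      cases v with
      | nil => exact absurd rfl hvne
      | cons b v' => simp
    have hv' : v = (1:G) :: List.replicate (v.length - 1) 1 := by
      conv_lhs => rw [hv]
      rw [← List.replicate_succ]
      congr 1
      omega
    refine ⟨m, a, w1 ++ List.replicate (v.length - 1) 1, hm, ?_, ha⟩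
    rw [hγ, hv', fuse_one_cons hune, hu]
    simp

end Aux

/-- Lemma 3.8 (2),(3): for `i ∈ {2,4}`, `{e^i} ∘ G_1 ∘ {e^i} ⊆ E_3`, and
`({e^2} ∘ G_1 ∘ {e^2}) ∩ ({e^4} ∘ G_1 ∘ {e^4}) = ∅`. -/
theorem conj_G1_by_eWords (G : Type*) [Group G] :
    (∀ i ∈ ({2, 4} : Set ℕ),
      circ (circ {List.replicate i (1 : G)} (G1 G)) {List.replicate i (1 : G)} ⊆ E3 G) ∧
    circ (circ {List.replicate 2 (1 : G)} (G1 G)) {List.replicate 2 (1 : G)} ∩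
      circ (circ {List.replicate 4 (1 : G)} (G1 G)) {List.replicate 4 (1 : G)} = ∅ := by
  constructor
  · intro i hi γ hγ
    have h1 : 1 ≤ i := by
      simp only [Set.mem_insert_iff, Set.mem_singleton_iff] at hi
      rcases hi with rfl | rfl <;> omega
    obtain ⟨m, a, w, hm, rfl, ha⟩ := stepMain h1 hγ
    have hm1 : 1 ≤ m := by
      simp only [Set.mem_insert_iff, Set.mem_singleton_iff] at hi
      rcases hi with rfl | rfl <;> omega
    constructor
    · obtain ⟨m', rfl⟩ : ∃ m', m = m' + 1 := ⟨m - 1, by omega⟩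
      rw [List.replicate_succ]
      simp
    · exact ⟨a, by simp, ha⟩
  · ext γ
    simp only [Set.mem_inter_iff, Set.mem_empty_iff_false, iff_false]
    rintro ⟨h2, h4⟩
    obtain ⟨m, a, w, hm, he, ha⟩ := stepMain (by norm_num) h2
    obtain ⟨m', a', w', hm', he', ha'⟩ := stepMain (by norm_num) h4
    have := lead_count_unique ha ha' m m' w w' (he.symm.trans he')
    omega
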